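/- For integers a_1,...,a_k and b_1,...,b_l with l ≥ 2, the continued fractions satisfy [a_1,...,a_k, -b_1, -b_2, ..., -b_l] = [a_1,...,a_{k-1}, a_k - 1, 1, b_1 - 1, b_2, ..., b_l], whenever both sides are defined. -/

import Mathlib

/-- The continued fraction `[x₁,…,xₘ] = 1/(x₁ + 1/(x₂ + ⋯ + 1/xₘ))`. -/
def cf : List ℤ → ℚ
  | [] => 0
  | x :: xs => 1 / ((x : ℚ) + cf xs)

/-- A continued fraction expansion is defined when no denominator appearing in the
recursive evaluation vanishes. -/
def cfDefined (l : List ℤ) : Prop :=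
  ∀ (x : ℤ) (xs : List ℤ), (x :: xs) ∈ l.tails → (x : ℚ) + cf xs ≠ 0

lemma cf_map_neg : ∀ L : List ℤ, cf (L.map (fun x => -x)) = -cf L
  | [] => by simp [cf]
  | x :: xs => by
    simp only [List.map_cons, cf, cf_map_neg xs]
    push_cast
    rw [← one_div_neg_eq_neg_one_div]
    ring_nf

lemma cf_append_congr (la : List ℤ) {s₁ s₂ : List ℤ} (h : cf s₁ = cf s₂) :
    cf (la ++ s₁) = cf (la ++ s₂) := by
  induction la with
  | nil => simpa using h
  | cons x xs ih => simp [cf, ih]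

/-- Lemma 3.4 (3): for `l ≥ 2` (here the `b`-block is `b₁ :: bmid ++ [bₗ]`),
`[a₁,…,a_k, -b₁, -b₂, …, -bₗ] = [a₁,…,a_{k-1}, a_k - 1, 1, b₁ - 1, b₂, …, bₗ]`,
whenever both sides are defined. -/
theorem cf_neg_tail_block (la : List ℤ) (ak : ℤ) (b₁ : ℤ) (bmid : List ℤ) (bl : ℤ)
    (h₁ : cfDefined (la ++ [ak] ++ ((b₁ :: bmid ++ [bl]).map (fun x => -x))))
    (h₂ : cfDefined (la ++ [ak - 1, 1, b₁ - 1] ++ bmid ++ [bl])) :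
    cf (la ++ [ak] ++ ((b₁ :: bmid ++ [bl]).map (fun x => -x))) =
      cf (la ++ [ak - 1, 1, b₁ - 1] ++ bmid ++ [bl]) := by
  set T := bmid ++ [bl] with hT
  have hb : (b₁ : ℚ) + cf T ≠ 0 := by
    have hmem : (-b₁ :: T.map (fun x => -x)) ∈
        (la ++ [ak] ++ ((b₁ :: bmid ++ [bl]).map (fun x => -x))).tails := by
      rw [List.mem_tails]
      exact ⟨la ++ [ak], by simp [hT]⟩
    have := h₁ _ _ hmem
    rw [cf_map_neg] at this
    push_cast at this
    intro h
    exact this (by linarith)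
  have hb' : (b₁ : ℚ) - 1 + cf T ≠ 0 := by
    have hmem : ((b₁ - 1) :: T) ∈
        (la ++ [ak - 1, 1, b₁ - 1] ++ bmid ++ [bl]).tails := by
      rw [List.mem_tails]
      exact ⟨la ++ [ak - 1, 1], by simp [hT]⟩
    have := h₂ _ _ hmem
    push_cast at this
    intro h
    exact this (by linarith)
  have key : cf (ak :: ((b₁ :: bmid ++ [bl]).map (fun x => -x))) =
      cf ((ak - 1) :: 1 :: (b₁ - 1) :: T) := by
    have : (b₁ :: bmid ++ [bl]).map (fun x => -x) = -b₁ :: T.map (fun x => -x) := by simp [hT]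
    rw [this]
    simp only [cf, cf_map_neg]
    push_cast
    congr 1
    have h1 : (1 : ℚ) + 1 / ((b₁:ℚ) - 1 + cf T) ≠ 0 := by
      field_simp
      intro h
      rw [div_eq_zero_iff] at h
      rcases h with h | h
      · exact hb (by linarith)
      · exact hb' h
    have h2 : (-b₁ : ℚ) + -cf T ≠ 0 := fun h => hb (by linarith)
    have e1 : (1:ℚ) + 1 / ((b₁:ℚ) - 1 + cf T) = ((b₁:ℚ) + cf T) / ((b₁:ℚ) - 1 + cf T) := by
      field_simp
      ring
    rw [e1, one_div_div]
    field_simp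
    ring
  calc cf (la ++ [ak] ++ ((b₁ :: bmid ++ [bl]).map (fun x => -x)))
      = cf (la ++ (ak :: ((b₁ :: bmid ++ [bl]).map (fun x => -x)))) := by
        simp
    _ = cf (la ++ ((ak - 1) :: 1 :: (b₁ - 1) :: T)) := cf_append_congr la key
    _ = cf (la ++ [ak - 1, 1, b₁ - 1] ++ bmid ++ [bl]) := by simp [hT]
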